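/- arXiv:2403.02139 — 2 statements merged into one kernel-verified Lean document; each statement's English description precedes it below -/
import Mathlib

section
/- Let f(θ) = Σ_{|j| ≤ r} f̂_j e^{ijθ} be a d×d matrix-valued trigonometric polynomial with f(θ) Hermitian positive semidefinite for every θ, and suppose the Fourier coefficient f̂₀ = (1/2π) ∫₀^{2π} f(θ) dθ is Hermitian positive definite. For n ≥ 1 set A_n = C_n(f), D = I_n ⊗ f̂₀, and V_n = I_{dn} − ω D^{-1} A_n. If 0 < ω < 2 / ‖f̂₀^{-1/2} f f̂₀^{-1/2}‖_∞, then there exists a > 0, depending only on f and ω (independent of n), such that for every n the matrix A_n − a A_n² − V_n^H A_n V_n is positive semidefinite; equivalently, ‖V_n x‖_{A_n}² ≤ ‖x‖_{A_n}² − a ‖A_n x‖₂² for all x ∈ ℂ^{dn}. -/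
open Matrix
open scoped Kronecker ComplexOrder Matrix.Norms.L2Operator

/-- The square root of a positive semidefinite matrix (the definition `Matrix.PosSemidef.sqrt`
of the older Mathlib, which has since been removed). -/
noncomputable def Matrix.PosSemidef.sqrt {n 𝕜 : Type*} [Fintype n] [RCLike 𝕜] [DecidableEq n]
    {A : Matrix n n 𝕜} (hA : A.PosSemidef) : Matrix n n 𝕜 :=
  hA.1.eigenvectorUnitary.1 * diagonal ((↑) ∘ Real.sqrt ∘ hA.1.eigenvalues) *
    (star hA.1.eigenvectorUnitary : Matrix n n 𝕜)

/-- The grid points `θ_i^{(n)} = 2πi/n`. -/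
noncomputable def gridPt (n : ℕ) (i : Fin n) : ℝ := 2 * Real.pi * i / n

/-- The Fourier matrix `F_n` with entries `n^{-1/2} e^{2πi jk/n}`. -/
noncomputable def Fmat (n : ℕ) : Matrix (Fin n) (Fin n) ℂ :=
  Matrix.of fun j k : Fin n =>
    (((Real.sqrt n)⁻¹ : ℝ) : ℂ) *
      Complex.exp (2 * Real.pi * Complex.I * (j : ℕ) * (k : ℕ) / n)

/-- The block diagonal matrix with `d×d` diagonal blocks `g 0, …, g (n-1)`. -/
def blkDiag (n d : ℕ) (g : Fin n → Matrix (Fin d) (Fin d) ℂ) :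
    Matrix (Fin n × Fin d) (Fin n × Fin d) ℂ :=
  Matrix.of fun p q => if p.1 = q.1 then g p.1 p.2 q.2 else 0

/-- The `dn × dn` block circulant matrix generated by `f : ℝ → ℂ^{d×d}`. -/
noncomputable def Cblock (n d : ℕ) (f : ℝ → Matrix (Fin d) (Fin d) ℂ) :
    Matrix (Fin n × Fin d) (Fin n × Fin d) ℂ :=
  (Fmat n ⊗ₖ (1 : Matrix (Fin d) (Fin d) ℂ)) *
    blkDiag n d (fun i => f (gridPt n i)) *
    (Fmat n ⊗ₖ (1 : Matrix (Fin d) (Fin d) ℂ))ᴴ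

lemma Fmat_mul_conjTranspose (n : ℕ) : Fmat n * (Fmat n)ᴴ = 1 := by
  ext j k
  have hn : 0 < n := j.pos
  have hn' : (n : ℂ) ≠ 0 := Nat.cast_ne_zero.mpr hn.ne'
  set t : ℂ := 2 * Real.pi * Complex.I / n with ht
  have hFapp : ∀ a b : Fin n, Fmat n a b
      = (((Real.sqrt n)⁻¹ : ℝ) : ℂ) * Complex.exp (((a : ℕ) * (b : ℕ) : ℂ) * t) := by
    intro a b
    simp only [Fmat, Matrix.of_apply, ht]
    ring_nf
  set z : ℂ := Complex.exp ((((j : ℕ) : ℂ) - ((k : ℕ) : ℂ)) * t) with hz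
  have hterm : ∀ m : Fin n, Fmat n j m * star (Fmat n k m)
      = (((Real.sqrt n)⁻¹ : ℝ) : ℂ)^2 * z ^ (m : ℕ) := by
    intro m
    rw [hFapp, hFapp]
    rw [star_mul']
    have h1 : star ((((Real.sqrt n)⁻¹ : ℝ) : ℂ)) = (((Real.sqrt n)⁻¹ : ℝ) : ℂ) := by
      simp [Complex.star_def, Complex.conj_ofReal]
    rw [h1]
    have h2 : star (Complex.exp (((k : ℕ) * (m : ℕ) : ℂ) * t))
        = Complex.exp (-(((k : ℕ) * (m : ℕ) : ℂ) * t)) := by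
      rw [Complex.star_def, ← Complex.exp_conj]
      congr 1
      simp only [ht, _root_.map_mul, map_div₀, map_natCast, map_ofNat,
        Complex.conj_ofReal, Complex.conj_I]
      ring
    rw [h2, hz, ← Complex.exp_nat_mul]
    rw [mul_mul_mul_comm, ← Complex.exp_add, sq]
    congr 2
    ring
  rw [Matrix.mul_apply]
  simp only [Matrix.conjTranspose_apply]
  have hc : (((Real.sqrt n)⁻¹ : ℝ) : ℂ)^2 = (n : ℂ)⁻¹ := by
    have h5 : ((Real.sqrt n)⁻¹)^2 = ((n : ℝ))⁻¹ := by
      rw [← Real.sqrt_inv, Real.sq_sqrt (by positivity)]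
    rw [← Complex.ofReal_pow, h5, Complex.ofReal_inv, Complex.ofReal_natCast]
  calc (∑ m : Fin n, Fmat n j m * star (Fmat n k m))
      = ∑ m : Fin n, (((Real.sqrt n)⁻¹ : ℝ) : ℂ)^2 * z ^ (m : ℕ) := by
        exact Finset.sum_congr rfl fun m _ => hterm m
    _ = (((Real.sqrt n)⁻¹ : ℝ) : ℂ)^2 * ∑ m ∈ Finset.range n, z ^ m := by
        rw [← Finset.mul_sum, Fin.sum_univ_eq_sum_range]
    _ = (1 : Matrix (Fin n) (Fin n) ℂ) j k := by
        rcases eq_or_ne j k with h | h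
        · subst h
          have hz1 : z = 1 := by simp [hz]
          simp only [hz1, one_pow, Finset.sum_const, Finset.card_range,
            nsmul_eq_mul, mul_one, hc]
          rw [inv_mul_cancel₀ hn']
          simp [Matrix.one_apply]
        · have hjknat : (j : ℕ) ≠ (k : ℕ) := fun habs => h (Fin.ext habs)
          have hz1 : z ≠ 1 := by
            rw [hz, Ne, Complex.exp_eq_one_iff]
            rintro ⟨m, hm⟩
            have h2pi : (2 * (Real.pi : ℂ) * Complex.I) ≠ 0 := by
              simp [Real.pi_ne_zero, Complex.I_ne_zero, Complex.ofReal_ne_zero]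
            rw [ht] at hm
            field_simp at hm
            have h4 : (((j:ℕ):ℂ) - ((k:ℕ):ℂ)) * (2 * Real.pi * Complex.I)
                = ((m * n : ℤ) : ℂ) * (2 * Real.pi * Complex.I) := by
              push_cast
              linear_combination (2 * (Real.pi : ℂ) * Complex.I) * hm
            have h5 : ((j:ℕ):ℂ) - ((k:ℕ):ℂ) = ((m * n : ℤ) : ℂ) :=
              mul_right_cancel₀ h2pi h4
            have hint : ((j:ℕ) : ℤ) - ((k:ℕ) : ℤ) = m * n := by exact_mod_cast h5
            have hdvd : (n:ℤ) ∣ ((j:ℕ) : ℤ) - ((k:ℕ) : ℤ) := ⟨m, by linarith [hint]⟩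
            have habs : |((j:ℕ) : ℤ) - ((k:ℕ) : ℤ)| < n := by
              have hj : ((j:ℕ) : ℤ) < n := by exact_mod_cast j.isLt
              have hk : ((k:ℕ) : ℤ) < n := by exact_mod_cast k.isLt
              have hj0 : (0:ℤ) ≤ (j:ℕ) := Int.natCast_nonneg _
              have hk0 : (0:ℤ) ≤ (k:ℕ) := Int.natCast_nonneg _
              rw [abs_lt]; omega
            have := Int.eq_zero_of_abs_lt_dvd hdvd habs
            apply hjknat
            omega
          have hzn : z ^ n = 1 := by
            rw [hz, ← Complex.exp_nat_mul]
            have h6 : (n : ℂ) * ((((j : ℕ) : ℂ) - ((k : ℕ) : ℂ)) * t)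
                = ((((j:ℕ):ℤ) - ((k:ℕ):ℤ) : ℤ) : ℂ) * (2 * Real.pi * Complex.I) := by
              rw [ht]
              push_cast
              field_simp
            rw [h6, Complex.exp_int_mul_two_pi_mul_I]
          rw [geom_sum_eq hz1, hzn]
          simp [Matrix.one_apply, h]


lemma blkDiag_mul (n d : ℕ) (g h : Fin n → Matrix (Fin d) (Fin d) ℂ) :
    blkDiag n d g * blkDiag n d h = blkDiag n d (fun i => g i * h i) := by
  ext ⟨i, p⟩ ⟨j, q⟩
  simp only [blkDiag, Matrix.mul_apply, Matrix.of_apply, Fintype.sum_prod_type]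
  rcases eq_or_ne i j with h' | h'
  · subst h'
    simp [Finset.sum_ite_eq, Matrix.mul_apply]
  · simp only [h', if_false]
    apply Finset.sum_eq_zero
    intro k _
    apply Finset.sum_eq_zero
    intro s _
    by_cases hik : i = k
    · subst hik; simp [h']
    · simp [hik]

lemma blkDiag_sub (n d : ℕ) (g h : Fin n → Matrix (Fin d) (Fin d) ℂ) :
    blkDiag n d g - blkDiag n d h = blkDiag n d (fun i => g i - h i) := by
  ext ⟨i, p⟩ ⟨j, q⟩
  simp only [blkDiag, Matrix.sub_apply, Matrix.of_apply]
  split <;> simp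

lemma blkDiag_smul (n d : ℕ) (c : ℂ) (g : Fin n → Matrix (Fin d) (Fin d) ℂ) :
    c • blkDiag n d g = blkDiag n d (fun i => c • g i) := by
  ext ⟨i, p⟩ ⟨j, q⟩
  simp only [blkDiag, Matrix.smul_apply, Matrix.of_apply]
  split <;> simp

lemma blkDiag_one (n d : ℕ) :
    blkDiag n d (fun _ => (1 : Matrix (Fin d) (Fin d) ℂ)) = 1 := by
  ext ⟨i, p⟩ ⟨j, q⟩
  simp only [blkDiag, Matrix.of_apply, Matrix.one_apply, Prod.mk.injEq, Prod.ext_iff]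
  by_cases hij : i = j <;> by_cases hpq : p = q <;> simp [hij, hpq]

lemma blkDiag_conjTranspose (n d : ℕ) (g : Fin n → Matrix (Fin d) (Fin d) ℂ) :
    (blkDiag n d g)ᴴ = blkDiag n d (fun i => (g i)ᴴ) := by
  ext ⟨i, p⟩ ⟨j, q⟩
  simp only [blkDiag, Matrix.conjTranspose_apply, Matrix.of_apply]
  rcases eq_or_ne i j with h' | h'
  · subst h'; simp
  · simp [h', Ne.symm h']

lemma blkDiag_posSemidef (n d : ℕ) (g : Fin n → Matrix (Fin d) (Fin d) ℂ)
    (hg : ∀ i, (g i).PosSemidef) : (blkDiag n d g).PosSemidef := by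
  refine Matrix.PosSemidef.of_dotProduct_mulVec_nonneg ?_ ?_
  · rw [Matrix.IsHermitian, blkDiag_conjTranspose]
    exact congrArg _ (funext fun i => (hg i).1)
  · intro x
    have hmv : ∀ (i : Fin n) (p : Fin d),
        (blkDiag n d g *ᵥ x) (i, p) = (g i *ᵥ fun s => x (i, s)) p := by
      intro i p
      simp only [Matrix.mulVec, dotProduct, Fintype.sum_prod_type, blkDiag,
        Matrix.of_apply, ite_mul, zero_mul]
      rw [Finset.sum_comm]
      simp [Finset.sum_ite_eq]
    have hx : star x ⬝ᵥ (blkDiag n d g *ᵥ x)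
        = ∑ i : Fin n, star (fun p => x (i, p)) ⬝ᵥ (g i *ᵥ fun p => x (i, p)) := by
      simp only [dotProduct, Fintype.sum_prod_type, Pi.star_apply]
      refine Finset.sum_congr rfl fun i _ => Finset.sum_congr rfl fun p _ => ?_
      rw [hmv i p]
    rw [hx]
    exact Finset.sum_nonneg fun i _ => (hg i).dotProduct_mulVec_nonneg _

-- commutation of kronecker with constant blkDiag
lemma kron_comm_blkDiag (n d : ℕ) (F : Matrix (Fin n) (Fin n) ℂ)
    (M : Matrix (Fin d) (Fin d) ℂ) :
    (F ⊗ₖ (1 : Matrix (Fin d) (Fin d) ℂ)) * blkDiag n d (fun _ => M)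
      = blkDiag n d (fun _ => M) * (F ⊗ₖ (1 : Matrix (Fin d) (Fin d) ℂ)) := by
  ext ⟨i, p⟩ ⟨j, q⟩
  simp only [Matrix.mul_apply, Fintype.sum_prod_type, blkDiag, Matrix.of_apply,
    Matrix.kroneckerMap_apply, Matrix.one_apply]
  simp only [mul_ite, mul_zero, ite_mul, zero_mul, mul_one, one_mul]
  simp [Finset.sum_ite_eq, Finset.sum_ite_eq', mul_comm]


lemma herm_shift {d : ℕ} (M : Matrix (Fin d) (Fin d) ℂ) (hM : Mᴴ = M)
    (x y : Fin d → ℂ) : star x ⬝ᵥ (M *ᵥ y) = star (M *ᵥ x) ⬝ᵥ y := by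
  rw [Matrix.star_mulVec, hM, Matrix.dotProduct_mulVec]

lemma dot_self_eq_normsq {d : ℕ} (v : Fin d → ℂ) :
    star v ⬝ᵥ v = ((‖(WithLp.equiv 2 (Fin d → ℂ)).symm v‖ ^ 2 : ℝ) : ℂ) := by
  calc star v ⬝ᵥ v
      = (inner ℂ ((WithLp.equiv 2 (Fin d → ℂ)).symm v)
          ((WithLp.equiv 2 (Fin d → ℂ)).symm v) : ℂ) := by
        simp only [EuclideanSpace.inner_eq_star_dotProduct]
        exact dotProduct_comm _ _
    _ = _ := by
        rw [inner_self_eq_norm_sq_to_K]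
        norm_cast

lemma psd_sqrt_spec {d : ℕ} {A : Matrix (Fin d) (Fin d) ℂ} (hA : A.PosSemidef) :
    (Matrix.PosSemidef.sqrt hA).PosSemidef ∧
      Matrix.PosSemidef.sqrt hA * Matrix.PosSemidef.sqrt hA = A := by
  have hUU : (star hA.1.eigenvectorUnitary : Matrix (Fin d) (Fin d) ℂ) *
      hA.1.eigenvectorUnitary.1 = 1 := Unitary.coe_star_mul_self _
  have hstar : (star hA.1.eigenvectorUnitary : Matrix (Fin d) (Fin d) ℂ) =
      (hA.1.eigenvectorUnitary.1)ᴴ := rfl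
  constructor
  · unfold Matrix.PosSemidef.sqrt
    rw [hstar]
    apply Matrix.PosSemidef.mul_mul_conjTranspose_same
    apply Matrix.PosSemidef.diagonal
    intro i
    simp [Real.sqrt_nonneg]
  · unfold Matrix.PosSemidef.sqrt
    conv_rhs => rw [hA.1.spectral_theorem, Unitary.conjStarAlgAut_apply]
    calc _ = hA.1.eigenvectorUnitary.1 *
          (diagonal ((RCLike.ofReal : ℝ → ℂ) ∘ Real.sqrt ∘ hA.1.eigenvalues) *
          ((star hA.1.eigenvectorUnitary : Matrix (Fin d) (Fin d) ℂ) * hA.1.eigenvectorUnitary.1) *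
          diagonal ((RCLike.ofReal : ℝ → ℂ) ∘ Real.sqrt ∘ hA.1.eigenvalues)) *
          (star hA.1.eigenvectorUnitary : Matrix (Fin d) (Fin d) ℂ) := by simp only [mul_assoc]
      _ = _ := by
        rw [hUU, mul_one, diagonal_mul_diagonal]
        congr 2
        congr 1
        funext i
        simp only [Function.comp_apply, ← RCLike.ofReal_mul,
          Real.mul_self_sqrt (hA.eigenvalues_nonneg i)]

set_option maxHeartbeats 1000000 in
lemma core {d : ℕ} (r : ℕ) (fhat : ℤ → Matrix (Fin d) (Fin d) ℂ)
    (f : ℝ → Matrix (Fin d) (Fin d) ℂ)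
    (hfdef : ∀ θ : ℝ, f θ =
      ∑ j ∈ Finset.Icc (-(r : ℤ)) (r : ℤ),
        Complex.exp (Complex.I * (j : ℂ) * (θ : ℂ)) • fhat j)
    (hpsd : ∀ θ, (f θ).PosSemidef)
    (hf0 : (fhat 0).PosDef)
    (ω : ℝ) (hω0 : 0 < ω)
    (hω2 : ω < 2 / ⨆ θ : ℝ,
      ‖(Matrix.PosSemidef.sqrt hf0.posSemidef)⁻¹ * f θ * (Matrix.PosSemidef.sqrt hf0.posSemidef)⁻¹‖) :
    ∃ a : ℝ, 0 < a ∧ ∀ θ : ℝ,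
      (f θ - (a : ℂ) • (f θ * f θ) -
        (1 - (ω : ℂ) • ((fhat 0)⁻¹ * f θ))ᴴ * f θ *
          (1 - (ω : ℂ) • ((fhat 0)⁻¹ * f θ))).PosSemidef := by
  classical
  set S : Matrix (Fin d) (Fin d) ℂ := Matrix.PosSemidef.sqrt hf0.posSemidef with hSdef
  set T : Matrix (Fin d) (Fin d) ℂ := S⁻¹ with hTdef
  set c : ℝ := ⨆ θ : ℝ, ‖T * f θ * T‖ with hcdef
  -- basic facts about S, T
  have hSps : S.PosSemidef := (psd_sqrt_spec hf0.posSemidef).1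
  have hSh : Sᴴ = S := hSps.1
  have hSS : S * S = fhat 0 := (psd_sqrt_spec hf0.posSemidef).2
  have hSdet : IsUnit S.det := by
    have h1 : IsUnit (fhat 0).det := isUnit_iff_ne_zero.mpr hf0.det_pos.ne'
    rw [← hSS, Matrix.det_mul] at h1
    exact (IsUnit.mul_iff.mp h1).1
  have hTh : Tᴴ = T := hSps.1.inv
  have hST : S * T = 1 := Matrix.mul_nonsing_inv S hSdet
  have hTS : T * S = 1 := Matrix.nonsing_inv_mul S hSdet
  have hNTT : (fhat 0)⁻¹ = T * T := by
    rw [← hSS, Matrix.mul_inv_rev]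
  -- boundedness of the sup
  have hbound : ∀ θ : ℝ, ‖T * f θ * T‖ ≤
      ‖T‖ * (∑ j ∈ Finset.Icc (-(r : ℤ)) (r : ℤ), ‖fhat j‖) * ‖T‖ := by
    intro θ
    have h1 : ‖f θ‖ ≤ ∑ j ∈ Finset.Icc (-(r : ℤ)) (r : ℤ), ‖fhat j‖ := by
      rw [hfdef θ]
      refine (norm_sum_le _ _).trans ?_
      refine Finset.sum_le_sum fun j _ => ?_
      rw [norm_smul]
      have h2 : ‖Complex.exp (Complex.I * (j : ℂ) * (θ : ℂ))‖ = 1 := by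
        rw [Complex.norm_exp]
        have : (Complex.I * (j : ℂ) * (θ : ℂ)).re = 0 := by simp
        rw [this, Real.exp_zero]
      rw [h2, one_mul]
    calc ‖T * f θ * T‖ ≤ ‖T * f θ‖ * ‖T‖ := norm_mul_le _ _
      _ ≤ ‖T‖ * ‖f θ‖ * ‖T‖ := by
          gcongr
          exact norm_mul_le _ _
      _ ≤ ‖T‖ * (∑ j ∈ Finset.Icc (-(r : ℤ)) (r : ℤ), ‖fhat j‖) * ‖T‖ := by
          gcongr
  have hbdd : BddAbove (Set.range fun θ : ℝ => ‖T * f θ * T‖) := by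
    refine ⟨‖T‖ * (∑ j ∈ Finset.Icc (-(r : ℤ)) (r : ℤ), ‖fhat j‖) * ‖T‖, ?_⟩
    rintro x ⟨θ, rfl⟩
    exact hbound θ
  have hle_c : ∀ θ : ℝ, ‖T * f θ * T‖ ≤ c := fun θ => le_ciSup hbdd θ
  -- positivity of c
  have hc_pos : 0 < c := by
    by_contra hcontra
    push_neg at hcontra
    have h2 : 2 / c ≤ 0 := div_nonpos_of_nonneg_of_nonpos (by norm_num) hcontra
    linarith
  -- d > 0
  have hd : 0 < d := by
    rcases Nat.eq_zero_or_pos d with h0 | h1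
    · exfalso
      have hzero : ∀ θ : ℝ, ‖T * f θ * T‖ = 0 := by
        intro θ
        have h2 : T * f θ * T = 0 := by
          ext i j
          exact absurd i.2 (by omega)
        rw [h2, norm_zero]
      rw [hcdef] at hc_pos
      simp only [hzero, ciSup_const] at hc_pos
      exact lt_irrefl 0 hc_pos
    · exact h1
  -- ‖S‖ > 0
  have hSnorm : 0 < ‖S‖ := by
    rw [norm_pos_iff]
    intro hS0
    have h0 : fhat 0 = 0 := by rw [← hSS, hS0, Matrix.mul_zero]
    have hx : (fun _ : Fin d => (1 : ℂ)) ≠ 0 := by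
      intro habs
      have := congrFun habs ⟨0, hd⟩
      simp at this
    have := hf0.dotProduct_mulVec_pos hx
    rw [h0] at this
    simp at this
  have hωc : ω * c < 2 := by
    calc ω * c < (2 / c) * c := by
          exact mul_lt_mul_of_pos_right hω2 hc_pos
      _ = 2 := by field_simp
  -- choose a
  refine ⟨(2 * ω - ω ^ 2 * c) / ‖S‖ ^ 2,
    div_pos (by nlinarith) (by positivity), ?_⟩
  intro θ
  set a : ℝ := (2 * ω - ω ^ 2 * c) / ‖S‖ ^ 2 with hadef
  have haS : a * ‖S‖ ^ 2 = 2 * ω - ω ^ 2 * c := by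
    rw [hadef]
    field_simp
  have ha0 : 0 ≤ a := by
    rw [hadef]
    have : 0 < 2 * ω - ω ^ 2 * c := by nlinarith
    positivity
  set B : Matrix (Fin d) (Fin d) ℂ := f θ with hBdef
  have hBps : B.PosSemidef := hpsd θ
  have hBh : Bᴴ = B := hBps.1
  -- expansion of the expression
  have hexp : B - ((a : ℝ) : ℂ) • (B * B) -
      (1 - ((ω : ℝ) : ℂ) • ((fhat 0)⁻¹ * B))ᴴ * B *
        (1 - ((ω : ℝ) : ℂ) • ((fhat 0)⁻¹ * B))
      = ((2 * ω : ℝ) : ℂ) • (B * (T * (T * B)))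
        - ((ω ^ 2 : ℝ) : ℂ) • (B * (T * (T * (B * (T * (T * B))))))
        - ((a : ℝ) : ℂ) • (B * B) := by
    rw [hNTT]
    simp only [conjTranspose_sub, conjTranspose_smul, conjTranspose_mul,
      conjTranspose_one, hTh, hBh, Complex.star_def, Complex.conj_ofReal,
      Matrix.sub_mul, Matrix.mul_sub, one_mul, mul_one, Matrix.smul_mul,
      Matrix.mul_smul, smul_smul, mul_assoc]
    push_cast
    module
  refine Matrix.PosSemidef.of_dotProduct_mulVec_nonneg ?_ ?_
  · -- Hermitian
    show _ = _
    rw [hexp]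
    simp only [conjTranspose_sub, conjTranspose_smul, conjTranspose_mul,
      hBh, hTh, Complex.star_def, Complex.conj_ofReal, mul_assoc]
  · -- quadratic form
    intro x
    rw [hexp]
    set y : Fin d → ℂ := B *ᵥ x with hydef
    set w : Fin d → ℂ := T *ᵥ y with hwdef
    have q1eq : star x ⬝ᵥ ((B * (T * (T * B))) *ᵥ x) = star w ⬝ᵥ w := by
      rw [← Matrix.mulVec_mulVec, ← Matrix.mulVec_mulVec, ← Matrix.mulVec_mulVec,
        herm_shift B hBh, herm_shift T hTh]
    have q2eq : star x ⬝ᵥ ((B * (T * (T * (B * (T * (T * B)))))) *ᵥ x)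
        = star w ⬝ᵥ ((T * (B * T)) *ᵥ w) := by
      rw [← Matrix.mulVec_mulVec, ← Matrix.mulVec_mulVec, ← Matrix.mulVec_mulVec,
        ← Matrix.mulVec_mulVec, ← Matrix.mulVec_mulVec, ← Matrix.mulVec_mulVec,
        herm_shift B hBh, herm_shift T hTh, ← Matrix.mulVec_mulVec,
        ← Matrix.mulVec_mulVec]
    have q3eq : star x ⬝ᵥ ((B * B) *ᵥ x) = star y ⬝ᵥ y := by
      rw [← Matrix.mulVec_mulVec, herm_shift B hBh]
    -- euclidean versions
    set wE : EuclideanSpace ℂ (Fin d) := (WithLp.equiv 2 (Fin d → ℂ)).symm w with hwE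
    set yE : EuclideanSpace ℂ (Fin d) := (WithLp.equiv 2 (Fin d → ℂ)).symm y with hyE
    have q1val : star w ⬝ᵥ w = ((‖wE‖ ^ 2 : ℝ) : ℂ) := dot_self_eq_normsq w
    have q3val : star y ⬝ᵥ y = ((‖yE‖ ^ 2 : ℝ) : ℂ) := dot_self_eq_normsq y
    -- q2 facts
    have hNpsd : (T * (B * T)).PosSemidef := by
      have h1 := hBps.conjTranspose_mul_mul_same T
      rwa [hTh, mul_assoc] at h1
    have hq2nonneg : (0 : ℂ) ≤ star w ⬝ᵥ ((T * (B * T)) *ᵥ w) := hNpsd.dotProduct_mulVec_nonneg w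
    obtain ⟨hq2re, hq2im⟩ := Complex.nonneg_iff.mp hq2nonneg
    set q2 : ℂ := star w ⬝ᵥ ((T * (B * T)) *ᵥ w) with hq2def
    have hq2real : q2 = ((q2.re : ℝ) : ℂ) := by
      apply Complex.ext <;> simp [← hq2im]
    -- bound on q2.re
    have hq2bound : q2.re ≤ c * ‖wE‖ ^ 2 := by
      have hinner : q2 = (inner ℂ wE
          ((WithLp.equiv 2 (Fin d → ℂ)).symm ((T * (B * T)) *ᵥ w)) : ℂ) := by
        simp only [hq2def, hwE, PiLp.inner_apply, RCLike.inner_apply,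
          dotProduct, Pi.star_apply,
          Complex.star_def]
        exact Finset.sum_congr rfl fun i _ => mul_comm _ _
      have h1 : q2.re ≤ ‖q2‖ := Complex.re_le_norm q2
      have h2 : ‖q2‖ ≤ ‖wE‖ * ‖(WithLp.equiv 2 (Fin d → ℂ)).symm
          ((T * (B * T)) *ᵥ w)‖ := by
        rw [hinner]
        exact norm_inner_le_norm _ _
      have h3 : ‖(WithLp.equiv 2 (Fin d → ℂ)).symm ((T * (B * T)) *ᵥ w)‖
          ≤ ‖T * (B * T)‖ * ‖wE‖ := Matrix.l2_opNorm_mulVec _ wE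
      have h4 : ‖T * (B * T)‖ ≤ c := by
        have := hle_c θ
        rwa [← hBdef, mul_assoc] at this
      have hcnn : (0:ℝ) ≤ c := le_of_lt hc_pos
      nlinarith [norm_nonneg wE, norm_nonneg ((WithLp.equiv 2 (Fin d → ℂ)).symm
          ((T * (B * T)) *ᵥ w))]
    -- bound on y
    have hyw : S *ᵥ w = y := by
      rw [hwdef, Matrix.mulVec_mulVec, hST, Matrix.one_mulVec]
    have hybound : ‖yE‖ ≤ ‖S‖ * ‖wE‖ := by
      have := Matrix.l2_opNorm_mulVec S wE
      rwa [show S *ᵥ wE = y from hyw] at this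
    -- put it together
    have hsum : star x ⬝ᵥ ((((2 * ω : ℝ) : ℂ) • (B * (T * (T * B)))
        - ((ω ^ 2 : ℝ) : ℂ) • (B * (T * (T * (B * (T * (T * B))))))
        - ((a : ℝ) : ℂ) • (B * B)) *ᵥ x)
        = ((2 * ω * ‖wE‖ ^ 2 - ω ^ 2 * q2.re - a * ‖yE‖ ^ 2 : ℝ) : ℂ) := by
      rw [Matrix.sub_mulVec, Matrix.sub_mulVec, Matrix.smul_mulVec,
        Matrix.smul_mulVec, Matrix.smul_mulVec]
      rw [dotProduct_sub, dotProduct_sub, dotProduct_smul, dotProduct_smul,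
        dotProduct_smul]
      rw [q1eq, q2eq, q3eq, q1val, q3val, hq2real]
      simp only [smul_eq_mul, Complex.ofReal_re]
      push_cast
      ring
    rw [hsum]
    rw [Complex.zero_le_real]
    have hy2 : ‖yE‖ ^ 2 ≤ ‖S‖ ^ 2 * ‖wE‖ ^ 2 := by
      nlinarith [norm_nonneg yE, norm_nonneg wE, norm_nonneg S]
    nlinarith [norm_nonneg wE, sq_nonneg ω, hq2bound, hy2, ha0, hc_pos]


lemma kron_one_conjTranspose {n d : ℕ} (F : Matrix (Fin n) (Fin n) ℂ) :
    (F ⊗ₖ (1 : Matrix (Fin d) (Fin d) ℂ))ᴴ = Fᴴ ⊗ₖ (1 : Matrix (Fin d) (Fin d) ℂ) := by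
  ext ⟨i, p⟩ ⟨j, q⟩
  simp only [Matrix.conjTranspose_apply, Matrix.kroneckerMap_apply]
  by_cases hpq : p = q
  · subst hpq; simp [Matrix.one_apply]
  · simp [Matrix.one_apply, hpq, Ne.symm hpq]

/-- Smoothing property of the relaxed block Jacobi method for block circulant
matrices: for admissible relaxation `ω` there is an `n`-independent `a > 0`
making `A_n - a A_n² - V_nᴴ A_n V_n` positive semidefinite for every `n`. -/
theorem stmt4 {d : ℕ} (r : ℕ) (fhat : ℤ → Matrix (Fin d) (Fin d) ℂ)
    (f : ℝ → Matrix (Fin d) (Fin d) ℂ)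
    (hfdef : ∀ θ : ℝ, f θ =
      ∑ j ∈ Finset.Icc (-(r : ℤ)) (r : ℤ),
        Complex.exp (Complex.I * (j : ℂ) * (θ : ℂ)) • fhat j)
    (hpsd : ∀ θ, (f θ).PosSemidef)
    (hf0 : (fhat 0).PosDef)
    (ω : ℝ) (hω0 : 0 < ω)
    (hω2 : ω < 2 / ⨆ θ : ℝ,
      ‖(Matrix.PosSemidef.sqrt hf0.posSemidef)⁻¹ * f θ * (Matrix.PosSemidef.sqrt hf0.posSemidef)⁻¹‖) :
    ∃ a : ℝ, 0 < a ∧ ∀ n : ℕ,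
      (Cblock n d f - (a : ℂ) • (Cblock n d f * Cblock n d f) -
        (1 - (ω : ℂ) • ((blkDiag n d fun _ => fhat 0)⁻¹ * Cblock n d f))ᴴ *
          Cblock n d f *
        (1 - (ω : ℂ) • ((blkDiag n d fun _ => fhat 0)⁻¹ * Cblock n d f))).PosSemidef := by
  obtain ⟨a, ha, hcore⟩ := core r fhat f hfdef hpsd hf0 ω hω0 hω2
  refine ⟨a, ha, fun n => ?_⟩
  set U : Matrix (Fin n × Fin d) (Fin n × Fin d) ℂ :=
    Fmat n ⊗ₖ (1 : Matrix (Fin d) (Fin d) ℂ) with hUdef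
  have hUU' : U * Uᴴ = 1 := by
    rw [hUdef, kron_one_conjTranspose, ← Matrix.mul_kronecker_mul,
      Fmat_mul_conjTranspose, one_mul, Matrix.one_kronecker_one]
  have hUU : Uᴴ * U = 1 := mul_eq_one_comm.mp hUU'
  set Bm : Matrix (Fin n × Fin d) (Fin n × Fin d) ℂ :=
    blkDiag n d (fun i => f (gridPt n i)) with hBmdef
  set Dinvm : Matrix (Fin n × Fin d) (Fin n × Fin d) ℂ :=
    blkDiag n d (fun _ => (fhat 0)⁻¹) with hDinvmdef
  have hf0det : IsUnit (fhat 0).det := isUnit_iff_ne_zero.mpr hf0.det_pos.ne'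
  have hDinv : (blkDiag n d fun _ => fhat 0)⁻¹ = Dinvm := by
    apply Matrix.inv_eq_right_inv
    rw [hDinvmdef, blkDiag_mul]
    rw [show (fun i : Fin n => fhat 0 * (fhat 0)⁻¹) = fun _ : Fin n => (1 : Matrix (Fin d) (Fin d) ℂ)
      from funext fun i => Matrix.mul_nonsing_inv _ hf0det]
    exact blkDiag_one n d
  have hA : Cblock n d f = U * Bm * Uᴴ := rfl
  have hcomm : U * Dinvm = Dinvm * U := (kron_comm_blkDiag n d (Fmat n) ((fhat 0)⁻¹)).symm ▸ rfl
  have hcomm' : U * Dinvm = Dinvm * U := by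
    rw [hUdef, hDinvmdef]
    exact kron_comm_blkDiag n d (Fmat n) ((fhat 0)⁻¹)
  set W : Matrix (Fin n × Fin d) (Fin n × Fin d) ℂ :=
    1 - (ω : ℂ) • (Dinvm * Bm) with hWdef
  have hV : 1 - (ω : ℂ) • ((blkDiag n d fun _ => fhat 0)⁻¹ * Cblock n d f)
      = U * W * Uᴴ := by
    rw [hDinv, hA, hWdef]
    rw [Matrix.mul_sub, Matrix.sub_mul, mul_one, hUU']
    congr 1
    rw [Matrix.mul_smul, Matrix.smul_mul]
    congr 1
    calc Dinvm * (U * Bm * Uᴴ) = (Dinvm * U) * Bm * Uᴴ := by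
          rw [← mul_assoc, ← mul_assoc]
      _ = U * (Dinvm * Bm) * Uᴴ := by rw [← hcomm', mul_assoc U Dinvm Bm]
  have hkey : Cblock n d f - (a : ℂ) • (Cblock n d f * Cblock n d f) -
        (1 - (ω : ℂ) • ((blkDiag n d fun _ => fhat 0)⁻¹ * Cblock n d f))ᴴ *
          Cblock n d f *
        (1 - (ω : ℂ) • ((blkDiag n d fun _ => fhat 0)⁻¹ * Cblock n d f))
      = U * (Bm - (a : ℂ) • (Bm * Bm) - Wᴴ * Bm * W) * Uᴴ := by
    rw [hV, hA]
    have h2 : (U * Bm * Uᴴ) * (U * Bm * Uᴴ) = U * (Bm * Bm) * Uᴴ := by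
      calc (U * Bm * Uᴴ) * (U * Bm * Uᴴ) = U * Bm * (Uᴴ * U) * Bm * Uᴴ := by
            simp only [mul_assoc]
        _ = U * (Bm * Bm) * Uᴴ := by rw [hUU]; simp only [mul_assoc, one_mul]
    have h3 : (U * W * Uᴴ)ᴴ = U * Wᴴ * Uᴴ := by
      simp only [Matrix.conjTranspose_mul, Matrix.conjTranspose_conjTranspose, mul_assoc]
    have h4 : (U * W * Uᴴ)ᴴ * (U * Bm * Uᴴ) * (U * W * Uᴴ)
        = U * (Wᴴ * Bm * W) * Uᴴ := by
      rw [h3]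
      calc U * Wᴴ * Uᴴ * (U * Bm * Uᴴ) * (U * W * Uᴴ)
          = U * Wᴴ * (Uᴴ * U) * Bm * (Uᴴ * U) * W * Uᴴ := by simp only [mul_assoc]
        _ = U * (Wᴴ * Bm * W) * Uᴴ := by rw [hUU]; simp only [mul_assoc, one_mul]
    rw [h2, h4]
    simp only [Matrix.mul_sub, Matrix.sub_mul, Matrix.mul_smul, Matrix.smul_mul]
  rw [hkey]
  apply Matrix.PosSemidef.mul_mul_conjTranspose_same
  have hW : W = blkDiag n d
      (fun i => 1 - (ω : ℂ) • ((fhat 0)⁻¹ * f (gridPt n i))) := by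
    rw [hWdef, hDinvmdef, hBmdef, blkDiag_mul, blkDiag_smul, ← blkDiag_sub,
      blkDiag_one]
  have hblk : Bm - (a : ℂ) • (Bm * Bm) - Wᴴ * Bm * W
      = blkDiag n d (fun i =>
          f (gridPt n i) - (a : ℂ) • (f (gridPt n i) * f (gridPt n i)) -
          (1 - (ω : ℂ) • ((fhat 0)⁻¹ * f (gridPt n i)))ᴴ * f (gridPt n i) *
          (1 - (ω : ℂ) • ((fhat 0)⁻¹ * f (gridPt n i)))) := by
    rw [hW, hBmdef]
    simp only [blkDiag_conjTranspose, blkDiag_mul, blkDiag_smul, blkDiag_sub]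
  rw [hblk]
  exact blkDiag_posSemidef n d _ (fun i => hcore (gridPt n i))
end

section
/- Let D ∈ ℂ^{n×n} be Hermitian positive definite, let A ∈ ℂ^{n×n} be Hermitian positive semidefinite, let ω ∈ ℝ, let a > 0, and set V = I_n − ω D^{-1} A. If the matrix 2ω D^{-1} − ω² D^{-1} A D^{-1} − a I_n is positive semidefinite, then the matrix A − a A² − V^H A V is positive semidefinite. -/
open Matrix
open scoped ComplexOrder

/-- If `2ω D⁻¹ - ω² D⁻¹ A D⁻¹ - a·I` is PSD (with `D` HPD, `A` HPSD, `a > 0`),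
then `A - a A² - Vᴴ A V` is PSD, where `V = I - ω D⁻¹ A`. -/
theorem stmt5 {n : ℕ} (D A : Matrix (Fin n) (Fin n) ℂ)
    (hD : D.PosDef) (hA : A.PosSemidef) (ω a : ℝ) (ha : 0 < a)
    (h : (((2 * ω : ℝ) : ℂ) • D⁻¹ - ((ω ^ 2 : ℝ) : ℂ) • (D⁻¹ * A * D⁻¹) -
      (a : ℂ) • (1 : Matrix (Fin n) (Fin n) ℂ)).PosSemidef) :
    (A - (a : ℂ) • (A * A) -
      (1 - (ω : ℂ) • (D⁻¹ * A))ᴴ * A * (1 - (ω : ℂ) • (D⁻¹ * A))).PosSemidef := by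
  have hAH : Aᴴ = A := hA.1
  have hDinv : (D⁻¹)ᴴ = D⁻¹ := hD.isHermitian.inv
  have key : A - (a : ℂ) • (A * A) -
      (1 - (ω : ℂ) • (D⁻¹ * A))ᴴ * A * (1 - (ω : ℂ) • (D⁻¹ * A)) =
      Aᴴ * (((2 * ω : ℝ) : ℂ) • D⁻¹ - ((ω ^ 2 : ℝ) : ℂ) • (D⁻¹ * A * D⁻¹) -
        (a : ℂ) • (1 : Matrix (Fin n) (Fin n) ℂ)) * A := by
    simp only [conjTranspose_sub, conjTranspose_smul, conjTranspose_mul, conjTranspose_one,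
      hAH, hDinv, Complex.star_def, Complex.conj_ofReal]
    push_cast
    noncomm_ring
    match_scalars <;> norm_num [two_smul] <;> ring
  rw [key]
  exact h.conjTranspose_mul_mul_same A
end
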